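/- Let β₀ = 1 and for n ≥ 1 define β_n = Σ_{ℓ=0}^{n-1} binomial(n+ℓ, n-ℓ) · (2n/(n+ℓ)) · β_ℓ. Then β_n ≤ (11n)^{2n} for all n ≥ 1. -/
import Mathlib


/-- The sequence `β₀ = 1`, `β_n = Σ_{ℓ=0}^{n-1} C(n+ℓ, n-ℓ) · (2n/(n+ℓ)) · β_ℓ`. -/
def beta : ℕ → ℚ
  | 0 => 1
  | (n + 1) =>
      ∑ ℓ : Fin (n + 1),
        ((n + 1 + (ℓ : ℕ)).choose (n + 1 - (ℓ : ℕ)) : ℚ)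
          * (2 * (n + 1) / ((n : ℚ) + 1 + (ℓ : ℕ))) * beta (ℓ : ℕ)
  decreasing_by exact Nat.lt_succ_of_le (Nat.lt_succ_iff.mp ℓ.isLt)

lemma beta_nonneg : ∀ n, 0 ≤ beta n := by
  intro n
  induction n using Nat.strong_induction_on with
  | _ n ih =>
    match n with
    | 0 => norm_num [beta]
    | m + 1 =>
      rw [beta]
      refine Finset.sum_nonneg fun ℓ _ => ?_
      have h1 : (0:ℚ) ≤ ((m + 1 + (ℓ:ℕ)).choose (m + 1 - (ℓ:ℕ)) : ℚ) := by positivity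
      have h2 : (0:ℚ) ≤ 2 * ((m:ℚ) + 1) / ((m : ℚ) + 1 + (ℓ : ℕ)) := by positivity
      have h3 := ih ℓ (Nat.lt_succ_of_le (Nat.lt_succ_iff.mp ℓ.isLt))
      exact mul_nonneg (mul_nonneg h1 h2) h3

lemma beta_aux (a : ℚ) (ha : 1 ≤ a) (j L : ℕ) :
    (2*a)^(j+1) * 2 * (11*a)^(2*L) * a ≤ (11*a)^(2*L + 2*(j+1)) := by
  have h0 : (0:ℚ) ≤ a := by linarith
  have h1 : (2*a)^j ≤ (121*a^2)^j :=
    pow_le_pow_left₀ (by linarith) (by nlinarith) j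
  have hcore : (2*a)^j * (4*a^2) ≤ (121*a^2)^j * (121*a^2) :=
    mul_le_mul h1 (by nlinarith) (by positivity) (by positivity)
  have hrw : (11*a)^(2*L + 2*(j+1)) = (11*a)^(2*L) * ((121*a^2)^j * (121*a^2)) := by
    rw [pow_add, pow_mul, pow_mul]
    ring
  rw [hrw]
  have hL : (0:ℚ) ≤ (11*a)^(2*L) := by positivity
  calc (2*a)^(j+1) * 2 * (11*a)^(2*L) * a
      = (11*a)^(2*L) * ((2*a)^j * (4*a^2)) := by ring
    _ ≤ (11*a)^(2*L) * ((121*a^2)^j * (121*a^2)) :=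
        mul_le_mul_of_nonneg_left hcore hL

/-- `β_n ≤ (11 n)^{2n}` for all `n ≥ 1`. -/
theorem beta_le (n : ℕ) (hn : 1 ≤ n) : beta n ≤ ((11 * n : ℚ)) ^ (2 * n) := by
  induction n using Nat.strong_induction_on with
  | _ n ih =>
  match n with
  | 0 => exact absurd hn (by norm_num)
  | m + 1 =>
    set a : ℚ := (m:ℚ) + 1 with ha
    have ha1 : (1:ℚ) ≤ a := by
      rw [ha]; have : (0:ℚ) ≤ (m:ℚ) := by positivity
      linarith
    have ha0 : (0:ℚ) < a := by linarith
    have hb : ∀ L : ℕ, L ≤ m → beta L ≤ (11*a)^(2*L) := by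
      intro L hLle
      cases L with
      | zero => simp [beta]
      | succ p =>
        have h1 := ih (p+1) (by omega) (by omega)
        refine h1.trans (pow_le_pow_left₀ (by positivity) ?_ _)
        have hcast : ((p+1:ℕ):ℚ) ≤ a := by
          rw [ha]; exact_mod_cast (by omega : p+1 ≤ m+1)
        push_cast at hcast ⊢
        linarith
    have key : ∀ ℓ : Fin (m+1),
        ((m + 1 + (ℓ:ℕ)).choose (m + 1 - (ℓ:ℕ)) : ℚ)
          * (2 * ((m:ℚ) + 1) / ((m : ℚ) + 1 + (ℓ : ℕ))) * beta (ℓ:ℕ)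
        ≤ (11 * a) ^ (2 * (m+1)) / a := by
      intro ℓ
      have hLm : (ℓ:ℕ) ≤ m := Nat.lt_succ_iff.mp ℓ.isLt
      obtain ⟨j, hj⟩ : ∃ j, m + 1 - (ℓ:ℕ) = j + 1 := ⟨m - (ℓ:ℕ), by omega⟩
      have hc : ((m + 1 + (ℓ:ℕ)).choose (m + 1 - (ℓ:ℕ)) : ℚ) ≤ (2*a)^(j+1) := by
        have h1 : (m + 1 + (ℓ:ℕ)).choose (m + 1 - (ℓ:ℕ)) ≤ (2*(m+1))^(j+1) := by
          calc (m + 1 + (ℓ:ℕ)).choose (m + 1 - (ℓ:ℕ))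
              ≤ (m+1+(ℓ:ℕ))^(m+1-(ℓ:ℕ)) := Nat.choose_le_pow _ _
            _ = (m+1+(ℓ:ℕ))^(j+1) := by rw [hj]
            _ ≤ (2*(m+1))^(j+1) := Nat.pow_le_pow_left (by omega) _
        calc ((m + 1 + (ℓ:ℕ)).choose (m + 1 - (ℓ:ℕ)) : ℚ)
            ≤ (((2*(m+1))^(j+1) : ℕ) : ℚ) := by exact_mod_cast h1
          _ = (2*a)^(j+1) := by rw [ha]; push_cast; ring
      have hd0 : (0:ℚ) < (m:ℚ) + 1 + ((ℓ:ℕ):ℚ) := by positivity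
      have hf : 2 * ((m:ℚ) + 1) / ((m : ℚ) + 1 + ((ℓ:ℕ):ℚ)) ≤ 2 := by
        rw [div_le_iff₀ hd0]
        have : (0:ℚ) ≤ ((ℓ:ℕ):ℚ) := by positivity
        linarith
      have hf0 : 0 ≤ 2 * ((m:ℚ) + 1) / ((m : ℚ) + 1 + ((ℓ:ℕ):ℚ)) := by positivity
      have hterm := mul_le_mul (mul_le_mul hc hf hf0 (by positivity))
        (hb (ℓ:ℕ) hLm) (beta_nonneg _) (by positivity)
      refine hterm.trans ?_
      rw [le_div_iff₀ ha0]
      have hexp : 2*(ℓ:ℕ) + 2*(j+1) = 2*(m+1) := by omega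
      rw [← hexp]
      exact beta_aux a ha1 j (ℓ:ℕ)
    rw [beta]
    refine le_trans (Finset.sum_le_sum fun ℓ (_ : ℓ ∈ Finset.univ) => key ℓ) (le_of_eq ?_)
    rw [Finset.sum_const, Finset.card_univ, Fintype.card_fin, nsmul_eq_mul]
    have hne : a ≠ 0 := ne_of_gt ha0
    rw [ha]
    push_cast
    field_simp
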